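/- Every involution in PGL(2, C(x)) is conjugate to the class of the matrix [[0, f],[1, 0]] for some nonzero f in C(x). Moreover, the classes of [[0,f],[1,0]] and [[0,g],[1,0]] are conjugate in PGL(2, C(x)) if and only if f/g is a square in C(x)*. -/

import Mathlib

/-- The field `ℂ(x)` of rational functions. -/
abbrev Kx := RatFunc ℂ

/-- The group `PGL(2, ℂ(x)) = GL(2, ℂ(x))` modulo its center. -/
abbrev PGL2Kx :=
  Matrix.GeneralLinearGroup (Fin 2) Kx ⧸
    Subgroup.center (Matrix.GeneralLinearGroup (Fin 2) Kx)

abbrev GL2 := Matrix.GeneralLinearGroup (Fin 2) Kx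

lemma mext {α : Type*} {a b c d a' b' c' d' : α} (h1 : a = a') (h2 : b = b')
    (h3 : c = c') (h4 : d = d') : !![a,b;c,d] = !![a',b';c',d'] := by
  subst h1 h2 h3 h4; rfl

lemma mcongr {α : Type*} {a b c d a' b' c' d' : α}
    (h : !![a,b;c,d] = !![a',b';c',d']) : a = a' ∧ b = b' ∧ c = c' ∧ d = d' := by
  refine ⟨?_, ?_, ?_, ?_⟩
  · simpa using congrFun (congrFun h 0) 0
  · simpa using congrFun (congrFun h 0) 1
  · simpa using congrFun (congrFun h 1) 0
  · simpa using congrFun (congrFun h 1) 1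

/-- Build a unit of the matrix ring from an explicit two-sided inverse. -/
noncomputable def mkGL (A B : Matrix (Fin 2) (Fin 2) Kx) (h1 : A * B = 1) (h2 : B * A = 1) : GL2 :=
  ⟨A, B, h1, h2⟩

@[simp] lemma mkGL_val (A B : Matrix (Fin 2) (Fin 2) Kx) (h1 : A * B = 1)
    (h2 : B * A = 1) : ((mkGL A B h1 h2 : GL2) : Matrix (Fin 2) (Fin 2) Kx) = A := rfl

lemma central_scalar (U : GL2) (hU : U ∈ Subgroup.center GL2) :
    ∃ p : Kx, p ≠ 0 ∧ (U : Matrix (Fin 2) (Fin 2) Kx) = !![p, 0; 0, p] := by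
  obtain ⟨a, b, c, d, hM⟩ :
      ∃ a b c d, (U : Matrix (Fin 2) (Fin 2) Kx) = !![a,b;c,d] :=
    ⟨_, _, _, _, Matrix.eta_fin_two _⟩
  have hS : ((!![0,1;1,0] : Matrix (Fin 2) (Fin 2) Kx) * !![0,1;1,0]) = 1 := by
    rw [Matrix.mul_fin_two, Matrix.one_fin_two]
    exact mext (by ring) (by ring) (by ring) (by ring)
  have hT1 : ((!![1,1;0,1] : Matrix (Fin 2) (Fin 2) Kx) * !![1,-1;0,1]) = 1 := by
    rw [Matrix.mul_fin_two, Matrix.one_fin_two]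
    exact mext (by ring) (by ring) (by ring) (by ring)
  have hT2 : ((!![1,-1;0,1] : Matrix (Fin 2) (Fin 2) Kx) * !![1,1;0,1]) = 1 := by
    rw [Matrix.mul_fin_two, Matrix.one_fin_two]
    exact mext (by ring) (by ring) (by ring) (by ring)
  have hSc := congrArg Units.val (Subgroup.mem_center_iff.mp hU (mkGL _ _ hS hS))
  have hTc := congrArg Units.val (Subgroup.mem_center_iff.mp hU (mkGL _ _ hT1 hT2))
  rw [Units.val_mul, Units.val_mul, mkGL_val, hM, Matrix.mul_fin_two,
    Matrix.mul_fin_two] at hSc hTc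
  obtain ⟨s1, s2, s3, s4⟩ := mcongr hSc
  obtain ⟨t1, t2, t3, t4⟩ := mcongr hTc
  have hc : c = 0 := by linear_combination t1
  have hb : b = 0 := by linear_combination hc - s1
  have hda : d = a := by linear_combination s2
  refine ⟨a, ?_, by rw [hM, hb, hc, hda]⟩
  intro ha
  have hmul := U.mul_inv
  rw [hM, hb, hc, hda, ha] at hmul
  have h00 := congrFun (congrFun hmul 0) 0
  simp [Matrix.mul_apply, Fin.sum_univ_two, Matrix.one_apply] at h00

lemma scalar_mem_center (Z : GL2) (c : Kx)
    (hZ : (Z : Matrix (Fin 2) (Fin 2) Kx) = !![c,0;0,c]) :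
    Z ∈ Subgroup.center GL2 := by
  rw [Subgroup.mem_center_iff]
  intro g
  apply Units.ext
  rw [Units.val_mul, Units.val_mul, hZ, Matrix.eta_fin_two (g : Matrix (Fin 2) (Fin 2) Kx),
    Matrix.mul_fin_two, Matrix.mul_fin_two]
  exact mext (by ring) (by ring) (by ring) (by ring)

theorem stmt_0 :
    (∀ σ : PGL2Kx, σ * σ = 1 → σ ≠ 1 →
      ∃ (f : Kx) (_ : f ≠ 0) (g : Matrix.GeneralLinearGroup (Fin 2) Kx),
        (↑g : Matrix (Fin 2) (Fin 2) Kx) = !![0, f; 1, 0] ∧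
        IsConj (QuotientGroup.mk g : PGL2Kx) σ) ∧
    (∀ f g : Kx, f ≠ 0 → g ≠ 0 →
      ∀ A B : Matrix.GeneralLinearGroup (Fin 2) Kx,
        (↑A : Matrix (Fin 2) (Fin 2) Kx) = !![0, f; 1, 0] →
        (↑B : Matrix (Fin 2) (Fin 2) Kx) = !![0, g; 1, 0] →
        (IsConj (QuotientGroup.mk A : PGL2Kx) (QuotientGroup.mk B) ↔
          IsSquare (f / g))) := by
  constructor
  · -- Part 1
    intro σ hσ2 hσ1
    obtain ⟨M, rfl⟩ := QuotientGroup.mk_surjective σ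
    have hcen : M * M ∈ Subgroup.center GL2 := by
      rw [← QuotientGroup.eq_one_iff (M * M)]
      rw [QuotientGroup.mk_mul]
      exact hσ2
    obtain ⟨p, hp0, hp⟩ := central_scalar _ hcen
    obtain ⟨a, b, c, d, hM⟩ :
        ∃ a b c d, (M : Matrix (Fin 2) (Fin 2) Kx) = !![a,b;c,d] :=
      ⟨_, _, _, _, Matrix.eta_fin_two _⟩
    rw [Units.val_mul, hM, Matrix.mul_fin_two] at hp
    obtain ⟨e1, e2, e3, e4⟩ := mcongr hp
    by_cases had : a + d = 0
    · -- trace zero case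
      have hd : d = -a := by linear_combination had
      subst hd
      have hgmul1 : (!![0,p;1,0] : Matrix (Fin 2) (Fin 2) Kx) * !![0,1;p⁻¹,0] = 1 := by
        rw [Matrix.mul_fin_two, Matrix.one_fin_two]
        exact mext (by field_simp; ring) (by ring) (by ring) (by ring)
      have hgmul2 : (!![0,1;p⁻¹,0] : Matrix (Fin 2) (Fin 2) Kx) * !![0,p;1,0] = 1 := by
        rw [Matrix.mul_fin_two, Matrix.one_fin_two]
        exact mext (by ring) (by ring) (by ring) (by field_simp; ring)
      refine ⟨p, hp0, mkGL _ _ hgmul1 hgmul2, rfl, ?_⟩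
      have conj_of : ∀ P : GL2,
          (P : Matrix (Fin 2) (Fin 2) Kx) * !![0,p;1,0] = (M : Matrix (Fin 2) (Fin 2) Kx) * P →
          IsConj (QuotientGroup.mk (mkGL _ _ hgmul1 hgmul2) : PGL2Kx) (QuotientGroup.mk M) := by
        intro P hP
        rw [isConj_iff]
        refine ⟨QuotientGroup.mk P, ?_⟩
        rw [← QuotientGroup.mk_inv, ← QuotientGroup.mk_mul, ← QuotientGroup.mk_mul]
        congr 1
        rw [mul_inv_eq_iff_eq_mul]
        exact Units.ext (by rw [Units.val_mul, Units.val_mul]; exact hP)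
      by_cases hc : c = 0
      · by_cases hb : b = 0
        · -- diagonal case
          subst hb hc
          have hpa : p = a * a := by linear_combination -e1
          subst hpa
          have ha : a ≠ 0 := by
            intro h; exact hp0 (by rw [h, mul_zero])
          have h2 : (2 : Kx) ≠ 0 := by
            intro h
            have h' : (algebraMap (Polynomial ℂ) Kx) 2 = (algebraMap (Polynomial ℂ) Kx) 0 := by
              rw [map_ofNat, map_zero]; exact h
            have h2' := RatFunc.algebraMap_injective ℂ h'
            norm_num at h2'
          have hP1 : (!![1,a;1,-a] : Matrix (Fin 2) (Fin 2) Kx) *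
              !![(2:Kx)⁻¹, (2:Kx)⁻¹; (2*a)⁻¹, -(2*a)⁻¹] = 1 := by
            rw [Matrix.mul_fin_two, Matrix.one_fin_two]
            exact mext (by field_simp; try ring) (by field_simp; try ring)
              (by field_simp; try ring) (by field_simp; try ring)
          have hP2 : (!![(2:Kx)⁻¹, (2:Kx)⁻¹; (2*a)⁻¹, -(2*a)⁻¹] : Matrix (Fin 2) (Fin 2) Kx) *
              !![1,a;1,-a] = 1 := by
            rw [Matrix.mul_fin_two, Matrix.one_fin_two]
            exact mext (by field_simp; try ring) (by field_simp; try ring)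
              (by field_simp; try ring) (by field_simp; try ring)
          apply conj_of (mkGL _ _ hP1 hP2)
          rw [mkGL_val, hM, Matrix.mul_fin_two, Matrix.mul_fin_two]
          exact mext (by ring) (by ring) (by ring) (by ring)
        · -- c = 0, b ≠ 0
          subst hc
          have hpa : p = a * a := by linear_combination -e1
          subst hpa
          have hP1 : (!![0,b;1,-a] : Matrix (Fin 2) (Fin 2) Kx) * !![a/b,1;b⁻¹,0] = 1 := by
            rw [Matrix.mul_fin_two, Matrix.one_fin_two]
            exact mext (by field_simp; ring) (by ring) (by field_simp; ring) (by ring)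
          have hP2 : (!![a/b,1;b⁻¹,0] : Matrix (Fin 2) (Fin 2) Kx) * !![0,b;1,-a] = 1 := by
            rw [Matrix.mul_fin_two, Matrix.one_fin_two]
            exact mext (by field_simp; ring) (by field_simp; ring) (by ring) (by field_simp; ring)
          apply conj_of (mkGL _ _ hP1 hP2)
          rw [mkGL_val, hM, Matrix.mul_fin_two, Matrix.mul_fin_two]
          exact mext (by ring) (by ring) (by ring) (by ring)
      · -- c ≠ 0
        have hP1 : (!![1,a;0,c] : Matrix (Fin 2) (Fin 2) Kx) * !![1,-(a/c);0,c⁻¹] = 1 := by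
          rw [Matrix.mul_fin_two, Matrix.one_fin_two]
          exact mext (by ring) (by field_simp; ring) (by ring) (by field_simp; ring)
        have hP2 : (!![1,-(a/c);0,c⁻¹] : Matrix (Fin 2) (Fin 2) Kx) * !![1,a;0,c] = 1 := by
          rw [Matrix.mul_fin_two, Matrix.one_fin_two]
          exact mext (by ring) (by field_simp; ring) (by ring) (by field_simp; ring)
        apply conj_of (mkGL _ _ hP1 hP2)
        rw [mkGL_val, hM, Matrix.mul_fin_two, Matrix.mul_fin_two]
        exact mext (by ring) (by linear_combination -e1) (by ring) (by ring)
    · -- nontrivial trace: M is scalar, contradiction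
      exfalso
      have hb : b = 0 := by
        rcases mul_eq_zero.mp (show b * (a + d) = 0 by linear_combination e2) with h | h
        · exact h
        · exact absurd h had
      have hcz : c = 0 := by
        rcases mul_eq_zero.mp (show c * (a + d) = 0 by linear_combination e3) with h | h
        · exact h
        · exact absurd h had
      have hda : d = a := by
        rcases mul_eq_zero.mp (show (d - a) * (a + d) = 0 by
          linear_combination e4 - e1 + c * hb - b * hcz) with h | h
        · linear_combination h
        · exact absurd h had
      apply hσ1
      rw [QuotientGroup.eq_one_iff]
      exact scalar_mem_center M a (by rw [hM, hb, hcz, hda])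
  · -- Part 2
    intro f g hf hg A B hA hB
    constructor
    · intro hconj
      obtain ⟨t, ht⟩ := isConj_iff.mp hconj
      obtain ⟨P, rfl⟩ := QuotientGroup.mk_surjective t
      have hmk : (QuotientGroup.mk (P * A * P⁻¹) : PGL2Kx) = QuotientGroup.mk B := by
        rw [QuotientGroup.mk_mul, QuotientGroup.mk_mul, QuotientGroup.mk_inv]
        exact ht
      have hZcen : (P * A * P⁻¹)⁻¹ * B ∈ Subgroup.center GL2 := QuotientGroup.eq.mp hmk
      obtain ⟨p, hp0, hpZ⟩ := central_scalar _ hZcen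
      have hBP : B * P = P * A * ((P * A * P⁻¹)⁻¹ * B) := by
        have h2 : P * ((P * A * P⁻¹)⁻¹ * B) = ((P * A * P⁻¹)⁻¹ * B) * P :=
          Subgroup.mem_center_iff.mp hZcen P
        calc B * P = P * A * P⁻¹ * ((P * A * P⁻¹)⁻¹ * B * P) := by group
          _ = P * A * P⁻¹ * (P * ((P * A * P⁻¹)⁻¹ * B)) := by rw [← h2]
          _ = P * A * ((P * A * P⁻¹)⁻¹ * B) := by group
      obtain ⟨w, x, y, z, hP⟩ :
          ∃ w x y z, (P : Matrix (Fin 2) (Fin 2) Kx) = !![w,x;y,z] :=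
        ⟨_, _, _, _, Matrix.eta_fin_two _⟩
      have hval := congrArg Units.val hBP
      rw [Units.val_mul, Units.val_mul, Units.val_mul, hA, hB, hpZ, hP,
        Matrix.mul_fin_two, Matrix.mul_fin_two, Matrix.mul_fin_two] at hval
      obtain ⟨E1, E2, E3, E4⟩ := mcongr hval
      have hdet : (w * z - x * y) ≠ 0 := by
        have hmul := congrArg Matrix.det (P.mul_inv)
        rw [Matrix.det_mul, Matrix.det_one, hP, Matrix.det_fin_two_of] at hmul
        exact left_ne_zero_of_mul_eq_one hmul
      have hg2 : g = f * p * p := by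
        by_cases hz : z = 0
        · have hw : w = 0 := by linear_combination E3 + p * hz
          have hy : y ≠ 0 := by
            intro hy
            exact hdet (by rw [hw, hy]; ring)
          have hgy : g * y = f * p * p * y := by linear_combination E1 + p * E4
          exact mul_right_cancel₀ hy hgy
        · have hgz : g * z = f * p * p * z := by linear_combination E2 + f * p * E3
          exact mul_right_cancel₀ hz hgz
      refine ⟨p⁻¹, ?_⟩
      rw [hg2]
      field_simp
    · intro hsq
      obtain ⟨r, hr⟩ := hsq
      have hr0 : r ≠ 0 := by
        intro h
        exact div_ne_zero hf hg (by rw [hr, h, mul_zero])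
      have hf2 : f = r * r * g := by
        have := (div_eq_iff hg).mp hr
        linear_combination this
      have hPm1 : (!![1,0;0,r] : Matrix (Fin 2) (Fin 2) Kx) * !![1,0;0,r⁻¹] = 1 := by
        rw [Matrix.mul_fin_two, Matrix.one_fin_two]
        exact mext (by ring) (by ring) (by ring) (by field_simp; ring)
      have hPm2 : (!![1,0;0,r⁻¹] : Matrix (Fin 2) (Fin 2) Kx) * !![1,0;0,r] = 1 := by
        rw [Matrix.mul_fin_two, Matrix.one_fin_two]
        exact mext (by ring) (by ring) (by ring) (by field_simp; ring)
      have hZm1 : (!![r,0;0,r] : Matrix (Fin 2) (Fin 2) Kx) * !![r⁻¹,0;0,r⁻¹] = 1 := by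
        rw [Matrix.mul_fin_two, Matrix.one_fin_two]
        exact mext (by field_simp; ring) (by ring) (by ring) (by field_simp; ring)
      have hZm2 : (!![r⁻¹,0;0,r⁻¹] : Matrix (Fin 2) (Fin 2) Kx) * !![r,0;0,r] = 1 := by
        rw [Matrix.mul_fin_two, Matrix.one_fin_two]
        exact mext (by field_simp; ring) (by ring) (by ring) (by field_simp; ring)
      set P : GL2 := mkGL _ _ hPm1 hPm2 with hPdef
      set Z : GL2 := mkGL _ _ hZm1 hZm2 with hZdef
      have hkey : P * A * P⁻¹ = Z * B := by
        rw [mul_inv_eq_iff_eq_mul]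
        apply Units.ext
        rw [Units.val_mul, Units.val_mul, Units.val_mul, hA, hB, hPdef, hZdef,
          mkGL_val, mkGL_val, Matrix.mul_fin_two, Matrix.mul_fin_two, Matrix.mul_fin_two]
        exact mext (by ring) (by rw [hf2]; ring) (by ring) (by ring)
      rw [isConj_iff]
      refine ⟨QuotientGroup.mk P, ?_⟩
      rw [← QuotientGroup.mk_inv, ← QuotientGroup.mk_mul, ← QuotientGroup.mk_mul, hkey,
        QuotientGroup.mk_mul]
      have hZ1 : (QuotientGroup.mk Z : PGL2Kx) = 1 :=
        (QuotientGroup.eq_one_iff Z).mpr (scalar_mem_center Z r rfl)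
      rw [hZ1, one_mul]
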